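/- Let W and T be real n×n matrices with W symmetric positive definite and T symmetric positive semidefinite, let μ_min and μ_max be the smallest and largest eigenvalues of S = W^{-1/2} T W^{-1/2}, and assume μ_max > 0. Set η = μ_min + μ_max, γ = 1 - μ_min·μ_max, α* = (γ + √(γ² + η²))/η and β* = 1/α*. Define σ(α,β) = (max over eigenvalues μ of S of |(μ-β)/(1+βμ)|) · (max over eigenvalues μ of S of |(1-αμ)/(α+μ)|). Then for all α > 0 and β > 0 one has σ(α*, β*) ≤ σ(α, β); that is, (α*, β*) minimizes σ over positive parameters. -/

import Mathlib

open Matrix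

/-- The square root of a positive semidefinite matrix, as `Matrix.PosSemidef.sqrt` was defined
in the older Mathlib (removed since). -/
noncomputable def Matrix.PosSemidef.oldSqrt {n : Type*} [Fintype n] [DecidableEq n]
    {A : Matrix n n ℝ} (hA : A.PosSemidef) : Matrix n n ℝ :=
  (hA.1.eigenvectorUnitary : Matrix n n ℝ) * diagonal ((↑) ∘ (√·) ∘ hA.1.eigenvalues) *
    (star hA.1.eigenvectorUnitary : Matrix n n ℝ)

private lemma oldSqrt_isHermitian {n : Type*} [Fintype n] [DecidableEq n]
    {A : Matrix n n ℝ} (hA : A.PosSemidef) : (Matrix.PosSemidef.oldSqrt hA).IsHermitian := by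
  unfold Matrix.PosSemidef.oldSqrt
  rw [star_eq_conjTranspose]
  exact isHermitian_mul_mul_conjTranspose _ (isHermitian_diagonal _)

private lemma flip_abs (t μ : ℝ) (ht : 0 < t) (hμ : 0 ≤ μ) :
    |(1 - t * μ) / (t + μ)| = |(μ - 1 / t) / (1 + (1 / t) * μ)| := by
  have h1 : t + μ ≠ 0 := by positivity
  have h2 : (1 : ℝ) + (1 / t) * μ ≠ 0 := by positivity
  have key : (μ - 1 / t) / (1 + (1 / t) * μ) = -((1 - t * μ) / (t + μ)) := by
    field_simp
    ring
  rw [key, abs_neg]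

set_option maxHeartbeats 1000000 in
/-- **Theorem 2 (optimal parameters).** With `η = μmin + μmax`, `γ = 1 - μmin·μmax`,
`α* = (γ + √(γ² + η²))/η` and `β* = 1/α*`, the pair `(α*, β*)` minimizes the bound
`σ(α,β) = (max_μ |(μ-β)/(1+βμ)|) · (max_μ |(1-αμ)/(α+μ)|)` over positive parameters,
where `μ` ranges over the eigenvalues of `S = W^{-1/2} T W^{-1/2}`. -/
theorem ttscsp_optimal_parameters
    {n : ℕ} (hn : 0 < n)
    (W T : Matrix (Fin n) (Fin n) ℝ)
    (hW : W.PosDef) (hT : T.PosSemidef)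
    (S : Matrix (Fin n) (Fin n) ℝ)
    (hSdef : S = (Matrix.PosSemidef.oldSqrt hW.posSemidef)⁻¹ * T * (Matrix.PosSemidef.oldSqrt hW.posSemidef)⁻¹)
    (hS : S.IsHermitian)
    (μmin μmax : ℝ)
    (hμmin : μmin = ⨅ i, hS.eigenvalues i)
    (hμmax : μmax = ⨆ i, hS.eigenvalues i)
    (hmaxpos : 0 < μmax)
    (η γ αstar βstar : ℝ)
    (hη : η = μmin + μmax) (hγ : γ = 1 - μmin * μmax)
    (hαstar : αstar = (γ + Real.sqrt (γ ^ 2 + η ^ 2)) / η)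
    (hβstar : βstar = 1 / αstar)
    (σ : ℝ → ℝ → ℝ)
    (hσ : ∀ a b : ℝ, σ a b =
      (⨆ i, |(hS.eigenvalues i - b) / (1 + b * hS.eigenvalues i)|) *
      (⨆ i, |(1 - a * hS.eigenvalues i) / (a + hS.eigenvalues i)|)) :
    ∀ a b : ℝ, 0 < a → 0 < b → σ αstar βstar ≤ σ a b := by
  intro a b ha hb
  have hne : Nonempty (Fin n) := ⟨⟨0, hn⟩⟩
  set f : Fin n → ℝ := hS.eigenvalues with hf
  -- S is positive semidefinite, so eigenvalues are nonnegative
  have hSpsd : S.PosSemidef := by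
    rw [hSdef]
    have hR : ((Matrix.PosSemidef.oldSqrt hW.posSemidef)⁻¹).IsHermitian :=
      (oldSqrt_isHermitian hW.posSemidef).inv
    have h := hT.conjTranspose_mul_mul_same (Matrix.PosSemidef.oldSqrt hW.posSemidef)⁻¹
    rwa [hR.eq] at h
  have hf0 : ∀ i, 0 ≤ f i := fun i => hSpsd.eigenvalues_nonneg i
  -- bounds
  have hle : ∀ i, μmin ≤ f i := by
    intro i; rw [hμmin]; exact ciInf_le (Finite.bddBelow_range f) i
  have hge : ∀ i, f i ≤ μmax := by
    intro i; rw [hμmax]; exact le_ciSup (Finite.bddAbove_range f) i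
  -- attainment
  obtain ⟨imin, himin⟩ := Finite.exists_min f
  obtain ⟨imax, himax⟩ := Finite.exists_max f
  have hfmin : f imin = μmin := le_antisymm (by rw [hμmin]; exact le_ciInf himin) (hle imin)
  have hfmax : f imax = μmax := le_antisymm (hge imax) (by rw [hμmax]; exact ciSup_le himax)
  have hm0 : 0 ≤ μmin := hfmin ▸ hf0 imin
  have hmM : μmin ≤ μmax := hfmin ▸ hge imin
  subst hη hγ
  set m := μmin
  set M := μmax
  have hηpos : (0:ℝ) < m + M := by linarith
  -- properties of αstar, βstar
  set r := Real.sqrt ((1 - m * M) ^ 2 + (m + M) ^ 2) with hr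
  have hr0 : 0 ≤ r := Real.sqrt_nonneg _
  have hr2 : r ^ 2 = (1 - m * M) ^ 2 + (m + M) ^ 2 := Real.sq_sqrt (by positivity)
  have hrγ : 0 < (1 - m * M) + r := by nlinarith [hr2, hr0, hηpos]
  have hαpos : 0 < αstar := by rw [hαstar]; exact div_pos hrγ hηpos
  have hβpos : 0 < βstar := by rw [hβstar]; positivity
  have hβeq : βstar = (m + M) / ((1 - m * M) + r) := by
    rw [hβstar, hαstar, one_div_div]
  have hrel : βstar * r = (m + M) - (1 - m * M) * βstar := by
    rw [hβeq]; field_simp; ring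
  have h4 : βstar ^ 2 * ((1 - m * M) ^ 2 + (m + M) ^ 2) =
      ((m + M) - (1 - m * M) * βstar) ^ 2 := by
    calc βstar ^ 2 * ((1 - m * M) ^ 2 + (m + M) ^ 2) = (βstar * r) ^ 2 := by rw [mul_pow, hr2]
    _ = _ := by rw [hrel]
  have h5 : (m + M) * ((m + M) * βstar ^ 2 + 2 * (1 - m * M) * βstar - (m + M)) = 0 := by
    linear_combination h4
  have hkey : (m + M) * βstar ^ 2 + 2 * (1 - m * M) * βstar - (m + M) = 0 :=
    (mul_eq_zero.mp h5).resolve_left hηpos.ne'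
  set β := βstar
  -- m ≤ β ≤ M
  have hmβ : m ≤ β := by
    have h1 : (m + M) * ((m - β) * (m * β + 1)) = β * ((m - M) * (m ^ 2 + 1)) := by
      linear_combination (-m) * hkey
    nlinarith [mul_pos hηpos (show (0:ℝ) < m * β + 1 by positivity),
      mul_nonneg (mul_nonneg hβpos.le (sub_nonneg.2 hmM)) (show (0:ℝ) ≤ m ^ 2 + 1 by positivity)]
  have hβM : β ≤ M := by
    have h2 : (m + M) * ((M - β) * (M * β + 1)) = β * ((M - m) * (M ^ 2 + 1)) := by
      linear_combination (-M) * hkey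
    nlinarith [mul_pos hηpos (show (0:ℝ) < M * β + 1 by positivity),
      mul_nonneg (mul_nonneg hβpos.le (sub_nonneg.2 hmM)) (show (0:ℝ) ≤ M ^ 2 + 1 by positivity)]
  -- equioscillation value
  have hd1 : (0:ℝ) < 1 + β * m :=
    add_pos_of_pos_of_nonneg one_pos (mul_nonneg hβpos.le hm0)
  have hd2 : (0:ℝ) < 1 + β * M :=
    add_pos_of_pos_of_nonneg one_pos (mul_nonneg hβpos.le (hm0.trans hmM))
  set c := (β - m) / (1 + β * m) with hc
  have hc0 : 0 ≤ c := div_nonneg (by linarith) hd1.le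
  have hceq : c = (M - β) / (1 + β * M) := by
    rw [hc, div_eq_div_iff hd1.ne' hd2.ne']
    linear_combination hkey
  -- (A): each eigenvalue term is ≤ c for parameter β
  have hA : ∀ i, |(f i - β) / (1 + β * f i)| ≤ c := by
    intro i
    have hdi : (0:ℝ) < 1 + β * f i :=
      add_pos_of_pos_of_nonneg one_pos (mul_nonneg hβpos.le (hf0 i))
    rcases le_total (f i) β with h | h
    · rw [abs_div, abs_of_pos hdi, abs_of_nonpos (by linarith), hc,
        div_le_div_iff₀ hdi hd1]
      nlinarith [mul_nonneg (sub_nonneg.2 (hle i)) (show (0:ℝ) ≤ β ^ 2 + 1 by positivity)]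
    · rw [abs_div, abs_of_pos hdi, abs_of_nonneg (by linarith), hceq,
        div_le_div_iff₀ hdi hd2]
      nlinarith [mul_nonneg (sub_nonneg.2 (hge i)) (show (0:ℝ) ≤ β ^ 2 + 1 by positivity)]
  -- (B): for any positive parameter, the sup is ≥ c
  have hB : ∀ t : ℝ, 0 < t → c ≤ ⨆ i, |(f i - t) / (1 + t * f i)| := by
    intro t ht
    rcases le_total t β with h | h
    · -- use μmax
      have hdt : (0:ℝ) < 1 + t * M :=
        add_pos_of_pos_of_nonneg one_pos (mul_nonneg ht.le (hm0.trans hmM))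
      have h1 : c ≤ |(f imax - t) / (1 + t * f imax)| := by
        rw [hfmax, abs_div, abs_of_pos hdt, abs_of_nonneg (by linarith), hceq,
          div_le_div_iff₀ hd2 hdt]
        nlinarith [mul_nonneg (sub_nonneg.2 h) (show (0:ℝ) ≤ M ^ 2 + 1 by positivity)]
      exact h1.trans (le_ciSup (f := fun i => |(f i - t) / (1 + t * f i)|) (Finite.bddAbove_range _) imax)
    · -- use μmin
      have hdt : (0:ℝ) < 1 + t * m :=
        add_pos_of_pos_of_nonneg one_pos (mul_nonneg ht.le hm0)
      have h1 : c ≤ |(f imin - t) / (1 + t * f imin)| := by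
        rw [hfmin, abs_div, abs_of_pos hdt, abs_of_nonpos (by linarith), hc,
          div_le_div_iff₀ hd1 hdt]
        nlinarith [mul_nonneg (sub_nonneg.2 h) (show (0:ℝ) ≤ m ^ 2 + 1 by positivity)]
      exact h1.trans (le_ciSup (f := fun i => |(f i - t) / (1 + t * f i)|) (Finite.bddAbove_range _) imin)
  -- rewrite second factor terms
  have hflip : ∀ t : ℝ, 0 < t →
      (⨆ i, |(1 - t * f i) / (t + f i)|) = ⨆ i, |(f i - 1 / t) / (1 + (1 / t) * f i)| := by
    intro t ht
    exact iSup_congr fun i => flip_abs t (f i) ht (hf0 i)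
  -- value at the optimum
  have hσstar : σ αstar βstar = c * c := by
    rw [hσ]
    have hF1 : (⨆ i, |(f i - βstar) / (1 + βstar * f i)|) = c :=
      le_antisymm (ciSup_le hA) (hB βstar hβpos)
    have hF2 : (⨆ i, |(1 - αstar * f i) / (αstar + f i)|) = c := by
      rw [hflip αstar hαpos, ← hβstar, hF1]
    rw [hF1, hF2]
  rw [hσstar, hσ]
  have hFb : c ≤ ⨆ i, |(f i - b) / (1 + b * f i)| := hB b hb
  have hFa : c ≤ ⨆ i, |(1 - a * f i) / (a + f i)| := by
    rw [hflip a ha]; exact hB (1 / a) (by positivity)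
  exact mul_le_mul hFb hFa hc0 (hc0.trans hFb)
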